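/- Let a and b be distinct positive real numbers. Then I(a,b) > (2A(a,b) + G(a,b))/3, where I is the identric mean, A(a,b) = (a+b)/2 is the arithmetic mean, and G(a,b) = √(ab) is the geometric mean. -/

import Mathlib

open Real

noncomputable def F0 (s : ℝ) : ℝ :=
  2 * s ^ 2 * Real.log s - (s ^ 2 - 1) * (1 + Real.log ((s ^ 2 + s + 1) / 3))

noncomputable def F1 (s : ℝ) : ℝ :=
  4 * s * Real.log s - 2 * s * Real.log ((s ^ 2 + s + 1) / 3)
    - (2 * s ^ 3 + s ^ 2 - 2 * s - 1) / (s ^ 2 + s + 1)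

noncomputable def F2 (s : ℝ) : ℝ :=
  4 * Real.log s - 2 * Real.log ((s ^ 2 + s + 1) / 3)
    + (5 + 2 * s - 3 * s ^ 2 - 2 * s ^ 3 - 2 * s ^ 4) / (s ^ 2 + s + 1) ^ 2

noncomputable def F3 (s : ℝ) : ℝ :=
  2 * (s - 1) ^ 2 * (2 * s + 1) * (s + 2) / (s * (s ^ 2 + s + 1) ^ 3)

lemma upos (s : ℝ) : (0:ℝ) < s ^ 2 + s + 1 := by nlinarith [sq_nonneg (s + 1), sq_nonneg s]

lemma hL (s : ℝ) :
    HasDerivAt (fun x : ℝ => Real.log ((x ^ 2 + x + 1) / 3))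
      ((2 * s + 1) / (s ^ 2 + s + 1)) s := by
  have hu : HasDerivAt (fun x : ℝ => (x ^ 2 + x + 1) / 3) ((2 * s + 1) / 3) s := by
    have := (((hasDerivAt_pow 2 s).add (hasDerivAt_id s)).add_const 1).div_const 3
    refine this.congr_deriv ?_
    push_cast; ring
  have hU := upos s
  have h := hu.log (by positivity)
  refine h.congr_deriv ?_
  field_simp

lemma hF0 (s : ℝ) (hs : 0 < s) : HasDerivAt F0 (F1 s) s := by
  have hU := upos s
  have h1 : HasDerivAt (fun x : ℝ => 2 * x ^ 2 * Real.log x)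
      (2 * (2 * s) * Real.log s + 2 * s ^ 2 * s⁻¹) s := by
    have := ((hasDerivAt_pow 2 s).const_mul 2).mul (Real.hasDerivAt_log hs.ne')
    refine this.congr_deriv ?_
    push_cast; ring
  have h2 : HasDerivAt (fun x : ℝ => (x ^ 2 - 1) * (1 + Real.log ((x ^ 2 + x + 1) / 3)))
      (2 * s * (1 + Real.log ((s ^ 2 + s + 1) / 3))
        + (s ^ 2 - 1) * ((2 * s + 1) / (s ^ 2 + s + 1))) s := by
    have := ((hasDerivAt_pow 2 s).sub_const 1).mul ((hL s).const_add 1)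
    refine this.congr_deriv ?_
    push_cast; ring
  have := h1.sub h2
  refine this.congr_deriv ?_
  unfold F1
  field_simp
  ring

lemma hF1 (s : ℝ) (hs : 0 < s) : HasDerivAt F1 (F2 s) s := by
  have hU := upos s
  have h1 : HasDerivAt (fun x : ℝ => 4 * x * Real.log x)
      (4 * Real.log s + 4 * s * s⁻¹) s := by
    have := ((hasDerivAt_id s).const_mul 4).mul (Real.hasDerivAt_log hs.ne')
    refine this.congr_deriv ?_
    simp only [id_eq]
    ring
  have h2 : HasDerivAt (fun x : ℝ => 2 * x * Real.log ((x ^ 2 + x + 1) / 3))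
      (2 * Real.log ((s ^ 2 + s + 1) / 3) + 2 * s * ((2 * s + 1) / (s ^ 2 + s + 1))) s := by
    have := ((hasDerivAt_id s).const_mul 2).mul (hL s)
    refine this.congr_deriv ?_
    simp only [id_eq]
    field_simp
  have hnum : HasDerivAt (fun x : ℝ => 2 * x ^ 3 + x ^ 2 - 2 * x - 1)
      (6 * s ^ 2 + 2 * s - 2) s := by
    have := ((((hasDerivAt_pow 3 s).const_mul 2).add (hasDerivAt_pow 2 s)).sub
      ((hasDerivAt_id s).const_mul 2)).sub_const 1
    refine this.congr_deriv ?_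
    push_cast; ring
  have hden : HasDerivAt (fun x : ℝ => x ^ 2 + x + 1) (2 * s + 1) s := by
    have := ((hasDerivAt_pow 2 s).add (hasDerivAt_id s)).add_const 1
    refine this.congr_deriv ?_
    push_cast; ring
  have h3 := hnum.div hden hU.ne'
  have := (h1.sub h2).sub h3
  refine this.congr_deriv ?_
  unfold F2
  field_simp
  ring

lemma hF2 (s : ℝ) (hs : 0 < s) : HasDerivAt F2 (F3 s) s := by
  have hU := upos s
  have h1 : HasDerivAt (fun x : ℝ => 4 * Real.log x) (4 * s⁻¹) s :=
    (Real.hasDerivAt_log hs.ne').const_mul 4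
  have h2 : HasDerivAt (fun x : ℝ => 2 * Real.log ((x ^ 2 + x + 1) / 3))
      (2 * ((2 * s + 1) / (s ^ 2 + s + 1))) s := (hL s).const_mul 2
  have hnum : HasDerivAt (fun x : ℝ => 5 + 2 * x - 3 * x ^ 2 - 2 * x ^ 3 - 2 * x ^ 4)
      (2 - 6 * s - 6 * s ^ 2 - 8 * s ^ 3) s := by
    have := ((((hasDerivAt_id s).const_mul 2).const_add 5).sub
      ((hasDerivAt_pow 2 s).const_mul 3)).sub ((hasDerivAt_pow 3 s).const_mul 2) |>.sub
      ((hasDerivAt_pow 4 s).const_mul 2)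
    refine this.congr_deriv ?_
    push_cast; ring
  have hden : HasDerivAt (fun x : ℝ => (x ^ 2 + x + 1) ^ 2)
      (2 * (s ^ 2 + s + 1) * (2 * s + 1)) s := by
    have hu : HasDerivAt (fun x : ℝ => x ^ 2 + x + 1) (2 * s + 1) s := by
      have := ((hasDerivAt_pow 2 s).add (hasDerivAt_id s)).add_const 1
      refine this.congr_deriv ?_
      push_cast; ring
    have := hu.pow 2
    refine this.congr_deriv ?_
    push_cast; ring
  have h3 := hnum.div hden (by positivity)
  have := (h1.sub h2).add h3
  refine this.congr_deriv ?_
  unfold F3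
  field_simp
  ring

lemma pos_of_deriv (f f' : ℝ → ℝ) (hd : ∀ s : ℝ, 1 ≤ s → HasDerivAt f (f' s) s)
    (h1 : f 1 = 0) (hp : ∀ s : ℝ, 1 < s → 0 < f' s) :
    ∀ s : ℝ, 1 < s → 0 < f s := by
  intro s hs
  have hmono : StrictMonoOn f (Set.Ici 1) := by
    apply strictMonoOn_of_deriv_pos (convex_Ici 1)
    · intro x hx
      exact (hd x hx).continuousAt.continuousWithinAt
    · intro x hx
      rw [interior_Ici] at hx
      rw [(hd x hx.le).deriv]
      exact hp x hx
  have := hmono Set.self_mem_Ici (Set.mem_Ici.2 hs.le) hs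
  rwa [h1] at this

lemma F0_pos (s : ℝ) (hs : 1 < s) : 0 < F0 s := by
  have h3 : ∀ x : ℝ, 1 < x → 0 < F3 x := by
    intro x hx
    have hx0 : (0:ℝ) < x := by linarith
    have hU := upos x
    have h1 : (0:ℝ) < (x - 1) ^ 2 := pow_pos (by linarith) 2
    exact div_pos (by nlinarith) (mul_pos hx0 (pow_pos hU 3))
  have h2 : ∀ x : ℝ, 1 < x → 0 < F2 x := by
    apply pos_of_deriv F2 F3 (fun x hx => hF2 x (by linarith)) ?_ h3
    unfold F2
    norm_num
  have h1 : ∀ x : ℝ, 1 < x → 0 < F1 x := by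
    apply pos_of_deriv F1 F2 (fun x hx => hF1 x (by linarith)) ?_ h2
    unfold F1
    norm_num
  refine pos_of_deriv F0 F1 (fun x hx => hF0 x (by linarith)) ?_ h1 s hs
  unfold F0
  norm_num

lemma core (s : ℝ) (hs : 1 < s) :
    Real.exp (2 * s ^ 2 * Real.log s / (s ^ 2 - 1) - 1) > (s ^ 2 + s + 1) / 3 := by
  have hU := upos s
  have hden : (0:ℝ) < s ^ 2 - 1 := by nlinarith
  have h0 := F0_pos s hs
  unfold F0 at h0
  have hgt : 2 * s ^ 2 * Real.log s / (s ^ 2 - 1) - 1 > Real.log ((s ^ 2 + s + 1) / 3) := by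
    rw [gt_iff_lt, ← sub_pos]
    have : 2 * s ^ 2 * Real.log s / (s ^ 2 - 1) - 1 - Real.log ((s ^ 2 + s + 1) / 3)
        = (2 * s ^ 2 * Real.log s - (s ^ 2 - 1) * (1 + Real.log ((s ^ 2 + s + 1) / 3)))
          / (s ^ 2 - 1) := by
      field_simp
      ring
    rw [this]
    exact div_pos h0 hden
  calc (s ^ 2 + s + 1) / 3 = Real.exp (Real.log ((s ^ 2 + s + 1) / 3)) := by
        rw [Real.exp_log (by positivity)]
    _ < _ := Real.exp_lt_exp.2 hgt

lemma ordered (a b : ℝ) (ha : 0 < a) (hb : 0 < b) (hlt : a < b) :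
    Real.exp ((b * Real.log b - a * Real.log a) / (b - a) - 1) > (a + b + Real.sqrt (a * b)) / 3 := by
  set s := Real.sqrt (b / a) with hsdef
  have hba : 1 < b / a := (one_lt_div ha).2 hlt
  have hs1 : 1 < s := by
    rw [hsdef]
    rw [show (1:ℝ) = Real.sqrt 1 by simp]
    exact Real.sqrt_lt_sqrt (by norm_num) hba
  have hs0 : 0 < s := by linarith
  have hssq : s ^ 2 = b / a := Real.sq_sqrt (by positivity)
  have hbeq : b = a * s ^ 2 := by rw [hssq]; field_simp
  have hlogb : Real.log b = Real.log a + 2 * Real.log s := by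
    rw [hbeq, Real.log_mul ha.ne' (by positivity), Real.log_pow]
    push_cast; ring
  have hden : (0:ℝ) < s ^ 2 - 1 := by nlinarith
  have hsab : Real.sqrt (a * b) = a * s := by
    rw [hbeq, show a * (a * s ^ 2) = (a * s) ^ 2 by ring, Real.sqrt_sq (by positivity)]
  have hexpr : (b * Real.log b - a * Real.log a) / (b - a) - 1
      = Real.log a + (2 * s ^ 2 * Real.log s / (s ^ 2 - 1) - 1) := by
    have ha' : a ≠ 0 := ha.ne'
    have hd1 : s ^ 2 - 1 ≠ 0 := hden.ne'
    have hd2 : a * s ^ 2 - a ≠ 0 := by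
      have : (0:ℝ) < a * (s ^ 2 - 1) := mul_pos ha hden
      intro h; apply this.ne'; linarith
    rw [hlogb, hbeq]
    field_simp
    ring
  rw [hexpr, Real.exp_add, Real.exp_log ha, hsab, hbeq]
  have := core s hs1
  calc (a + a * s ^ 2 + a * s) / 3 = a * ((s ^ 2 + s + 1) / 3) := by ring
    _ < a * Real.exp (2 * s ^ 2 * Real.log s / (s ^ 2 - 1) - 1) := by
        exact (mul_lt_mul_iff_right₀ ha).2 this

theorem identric_gt (a b : ℝ) (ha : 0 < a) (hb : 0 < b) (hab : a ≠ b) :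
    (1 / Real.exp 1) * (b ^ b / a ^ a) ^ (1 / (b - a)) >
      (2 * ((a + b) / 2) + Real.sqrt (a * b)) / 3 := by
  have hX : b ^ b / a ^ a = Real.exp (b * Real.log b - a * Real.log a) := by
    rw [Real.rpow_def_of_pos hb, Real.rpow_def_of_pos ha, ← Real.exp_sub]
    ring_nf
  have hkey : (1 / Real.exp 1) * (b ^ b / a ^ a) ^ (1 / (b - a))
      = Real.exp ((b * Real.log b - a * Real.log a) / (b - a) - 1) := by
    have h2 : Real.exp (b * Real.log b - a * Real.log a) ^ (1 / (b - a))
        = Real.exp ((b * Real.log b - a * Real.log a) * (1 / (b - a))) := by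
      rw [Real.rpow_def_of_pos (Real.exp_pos _), Real.log_exp]
    rw [hX, h2, mul_one_div, Real.exp_sub]
    ring
  rw [hkey, show (2 * ((a + b) / 2) + Real.sqrt (a * b)) / 3 = (a + b + Real.sqrt (a * b)) / 3 by ring]
  rcases lt_or_gt_of_ne hab with h | h
  · exact ordered a b ha hb h
  · have := ordered b a hb ha h
    rw [show (b * Real.log b - a * Real.log a) / (b - a)
        = (a * Real.log a - b * Real.log b) / (a - b) by
      rw [← neg_sub (a * Real.log a), ← neg_sub a b, neg_div_neg_eq],
      show a + b + Real.sqrt (a * b) = b + a + Real.sqrt (b * a) by rw [mul_comm]; ring]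
    exact this
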